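/- Let K be a positive integer and let (μ, Ω, Λ) and (μ̃, Ω̃, Λ̃) be MSN parameters: μ, μ̃, Λ, Λ̃ ∈ ℝ^K and Ω, Ω̃ K×K positive definite, with Δ = Ω^{1/2}·Λ/√(1+ΛᵀΛ), Γ = Ω − ΔΔᵀ, and analogously Δ̃, Γ̃. Let CF and C̃F denote the corresponding MSN characteristic functions CF(t) = exp(i·tᵀμ − ½·tᵀΩt)·(1 + i·ℑ(Δᵀt)) and C̃F(t) = exp(i·tᵀμ̃ − ½·tᵀΩ̃t)·(1 + i·ℑ(Δ̃ᵀt)). For every t ∈ ℝ^K with tᵀ(Γ − Γ̃)t > 0, lim_{c→∞} CF(ct)/C̃F(ct) = 0. -/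

import Mathlib

open Filter Matrix

noncomputable section

set_option maxHeartbeats 1000000

/-- ℑ(x) = ∫₀ˣ √(2/π)·exp(u²/2) du. -/
def ImInt (x : ℝ) : ℝ := ∫ u in (0:ℝ)..x, Real.sqrt (2 / Real.pi) * Real.exp (u ^ 2 / 2)

/-- The Δ parameter of MSN(μ, Ω, Λ): Δ = Ω^{1/2}·Λ/√(1+ΛᵀΛ). -/
def msnDelta {K : ℕ} (Ω : Matrix (Fin K) (Fin K) ℝ) (hΩ : Ω.PosDef)
    (Λ : Fin K → ℝ) : Fin K → ℝ :=
  (Real.sqrt (1 + Λ ⬝ᵥ Λ))⁻¹ • ((hΩ.posSemidef.1.eigenvectorUnitary : Matrix (Fin K) (Fin K) ℝ) *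
      diagonal ((RCLike.ofReal : ℝ → ℝ) ∘ Real.sqrt ∘ hΩ.posSemidef.1.eigenvalues) *
      (star hΩ.posSemidef.1.eigenvectorUnitary : Matrix (Fin K) (Fin K) ℝ)).mulVec Λ

/-- The Γ parameter of MSN(μ, Ω, Λ): Γ = Ω − ΔΔᵀ. -/
def msnGamma {K : ℕ} (Ω : Matrix (Fin K) (Fin K) ℝ) (hΩ : Ω.PosDef)
    (Λ : Fin K → ℝ) : Matrix (Fin K) (Fin K) ℝ :=
  Ω - vecMulVec (msnDelta Ω hΩ Λ) (msnDelta Ω hΩ Λ)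

/-- The MSN characteristic function. -/
def msnCF {K : ℕ} (μ : Fin K → ℝ) (Ω : Matrix (Fin K) (Fin K) ℝ) (hΩ : Ω.PosDef)
    (Λ : Fin K → ℝ) (t : Fin K → ℝ) : ℂ :=
  Complex.exp (Complex.I * ((t ⬝ᵥ μ : ℝ) : ℂ) - ((t ⬝ᵥ Ω.mulVec t / 2 : ℝ) : ℂ)) *
    (1 + Complex.I * ((ImInt (msnDelta Ω hΩ Λ ⬝ᵥ t) : ℝ) : ℂ))

lemma ImInt_zero : ImInt 0 = 0 := by simp [ImInt]

lemma ImInt_neg (x : ℝ) : ImInt (-x) = - ImInt x := by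
  unfold ImInt
  have h : (∫ u in (0:ℝ)..(-x), Real.sqrt (2/Real.pi) * Real.exp (u ^ 2 / 2))
      = ∫ u in (0:ℝ)..(-x), Real.sqrt (2/Real.pi) * Real.exp ((-u) ^ 2 / 2) := by
    simp
  rw [h, intervalIntegral.integral_comp_neg
      (f := fun u => Real.sqrt (2/Real.pi) * Real.exp (u ^ 2 / 2)), neg_neg, neg_zero,
    intervalIntegral.integral_symm]

lemma ImInt_nonneg {x : ℝ} (hx : 0 ≤ x) : 0 ≤ ImInt x := by
  apply intervalIntegral.integral_nonneg hx
  intro u _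
  positivity

lemma abs_ImInt_eq (y : ℝ) : |ImInt y| = ImInt |y| := by
  rcases le_or_gt 0 y with h | h
  · rw [abs_of_nonneg h, abs_of_nonneg (ImInt_nonneg h)]
  · rw [abs_of_neg h, show |ImInt y| = |ImInt (-(-y))| by rw [neg_neg], ImInt_neg,
      abs_neg, abs_of_nonneg (ImInt_nonneg (by linarith))]

lemma abs_ImInt_le (x : ℝ) : |ImInt x| ≤ Real.sqrt (2/Real.pi) * |x| * Real.exp (x^2/2) := by
  unfold ImInt
  have h := intervalIntegral.norm_integral_le_of_norm_le_const
    (a := (0:ℝ)) (b := x) (C := Real.sqrt (2/Real.pi) * Real.exp (x^2/2))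
    (f := fun u => Real.sqrt (2/Real.pi) * Real.exp (u ^ 2 / 2)) ?_
  · rw [Real.norm_eq_abs, sub_zero] at h
    calc |∫ u in (0:ℝ)..x, Real.sqrt (2/Real.pi) * Real.exp (u ^ 2 / 2)|
        ≤ Real.sqrt (2/Real.pi) * Real.exp (x^2/2) * |x| := h
      _ = Real.sqrt (2/Real.pi) * |x| * Real.exp (x^2/2) := by ring
  · intro u hu
    rw [Real.norm_eq_abs, abs_of_nonneg (by positivity)]
    have hu2 : u^2 ≤ x^2 := by
      rcases Set.mem_uIoc.mp hu with ⟨h1, h2⟩ | ⟨h1, h2⟩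
      · nlinarith
      · nlinarith
    have he : Real.exp (u^2/2) ≤ Real.exp (x^2/2) := Real.exp_le_exp.mpr (by linarith)
    nlinarith [Real.sqrt_nonneg (2/Real.pi), Real.exp_pos (u^2/2)]

lemma ImInt_ge {x : ℝ} (hx : 1 ≤ x) :
    Real.sqrt (2/Real.pi) * x⁻¹ * Real.exp (x^2/2 - 1) ≤ ImInt x := by
  have hx0 : 0 < x := by linarith
  have hinv : x⁻¹ ≤ 1 := by rw [inv_le_one_iff₀]; right; exact hx
  have hinv0 : 0 < x⁻¹ := by positivity
  have ha0 : 0 ≤ x - x⁻¹ := by linarith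
  have hax : x - x⁻¹ ≤ x := by linarith
  have hxx : x * x⁻¹ = 1 := mul_inv_cancel₀ hx0.ne'
  set f : ℝ → ℝ := fun u => Real.sqrt (2/Real.pi) * Real.exp (u ^ 2 / 2) with hf
  have hcont : Continuous f := by fun_prop
  have h1 : IntervalIntegrable f MeasureTheory.volume 0 (x - x⁻¹) := hcont.intervalIntegrable _ _
  have h2 : IntervalIntegrable f MeasureTheory.volume (x - x⁻¹) x := hcont.intervalIntegrable _ _
  have hsplit : ImInt x = (∫ u in (0:ℝ)..(x - x⁻¹), f u) + ∫ u in (x - x⁻¹)..x, f u :=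
    (intervalIntegral.integral_add_adjacent_intervals h1 h2).symm
  have hpos1 : 0 ≤ ∫ u in (0:ℝ)..(x - x⁻¹), f u := by
    apply intervalIntegral.integral_nonneg ha0
    intro u _; positivity
  have hlow : Real.sqrt (2/Real.pi) * x⁻¹ * Real.exp (x^2/2 - 1) ≤ ∫ u in (x - x⁻¹)..x, f u := by
    have hC : ∀ u ∈ Set.Icc (x - x⁻¹) x, Real.sqrt (2/Real.pi) * Real.exp (x^2/2 - 1) ≤ f u := by
      intro u hu
      have hua : x - x⁻¹ ≤ u := hu.1
      have hu0 : 0 ≤ u := ha0.trans hua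
      have h2u : (x - x⁻¹)^2 ≤ u^2 := pow_le_pow_left₀ ha0 hua 2
      have key : x^2/2 - 1 ≤ u^2/2 := by nlinarith [sq_nonneg (x⁻¹)]
      have hee := Real.exp_le_exp.mpr key
      show _ ≤ Real.sqrt (2/Real.pi) * Real.exp (u ^ 2 / 2)
      nlinarith [Real.sqrt_nonneg (2/Real.pi), Real.exp_pos (x^2/2-1)]
    have hmono := intervalIntegral.integral_mono_on hax
      (intervalIntegrable_const) h2 hC
    rw [intervalIntegral.integral_const, smul_eq_mul] at hmono
    calc Real.sqrt (2/Real.pi) * x⁻¹ * Real.exp (x^2/2 - 1)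
        = (x - (x - x⁻¹)) * (Real.sqrt (2/Real.pi) * Real.exp (x^2/2 - 1)) := by ring
      _ ≤ ∫ u in (x - x⁻¹)..x, f u := hmono
  rw [hsplit]; linarith

lemma msnCF_abs {K : ℕ} (μ : Fin K → ℝ) (Ω : Matrix (Fin K) (Fin K) ℝ) (hΩ : Ω.PosDef)
    (Λ : Fin K → ℝ) (s : Fin K → ℝ) :
    ‖msnCF μ Ω hΩ Λ s‖ =
      Real.exp (-(s ⬝ᵥ Ω.mulVec s)/2) *
        Real.sqrt (1 + (ImInt (msnDelta Ω hΩ Λ ⬝ᵥ s))^2) := by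
  unfold msnCF
  rw [norm_mul, Complex.norm_exp]
  congr 1
  · congr 1
    simp [Complex.sub_re, Complex.mul_re]
    ring
  · rw [show (1 : ℂ) + Complex.I * ((ImInt (msnDelta Ω hΩ Λ ⬝ᵥ s) : ℝ) : ℂ)
        = ((1:ℝ) : ℂ) + ((ImInt (msnDelta Ω hΩ Λ ⬝ᵥ s) : ℝ) : ℂ) * Complex.I by push_cast; ring,
      Complex.norm_add_mul_I]
    norm_num

lemma dot_vecMulVec {K : ℕ} (d t : Fin K → ℝ) :
    t ⬝ᵥ (vecMulVec d d).mulVec t = (d ⬝ᵥ t)^2 := by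
  simp only [Matrix.mulVec, Matrix.vecMulVec_apply, dotProduct]
  rw [sq, Finset.sum_mul_sum]
  simp_rw [Finset.mul_sum]
  exact Finset.sum_congr rfl fun i _ => Finset.sum_congr rfl fun j _ => by ring

lemma key_tendsto (ω ω' d d' : ℝ) (hε : 0 < (ω - d^2) - (ω' - d'^2)) :
    Tendsto (fun c : ℝ =>
      Real.exp (-(c^2*ω)/2) * Real.sqrt (1 + (ImInt (c*d))^2) /
      (Real.exp (-(c^2*ω')/2) * Real.sqrt (1 + (ImInt (c*d'))^2)))
      atTop (nhds 0) := by
  set ε := (ω - d^2) - (ω' - d'^2) with hεdef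
  set s := Real.sqrt (2/Real.pi) with hs
  have hs0 : 0 < s := Real.sqrt_pos.mpr (by positivity)
  have hmax1 : (1:ℝ) ≤ max 1 (|d'| * Real.exp 1 * s⁻¹) := le_max_left _ _
  set C := (1 + s*|d|) * max 1 (|d'| * Real.exp 1 * s⁻¹) with hC
  have h1sd : 0 < 1 + s*|d| := by positivity
  have hC0 : 0 < C := by
    apply mul_pos h1sd (lt_of_lt_of_le one_pos hmax1)
  -- the dominating function tends to 0
  have hlim : Tendsto (fun c : ℝ => C * c^2 * Real.exp (-(ε/2*c^2))) atTop (nhds 0) := by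
    have h1 : Tendsto (fun u : ℝ => C*(2/ε) * (u^1 * Real.exp (-u))) atTop (nhds 0) := by
      simpa using
        (tendsto_const_nhds (x := C*(2/ε))).mul (Real.tendsto_pow_mul_exp_neg_atTop_nhds_zero 1)
    have h2 : Tendsto (fun c : ℝ => ε/2*c^2) atTop atTop := by
      apply Tendsto.const_mul_atTop (by linarith : (0:ℝ) < ε/2)
      exact tendsto_pow_atTop (by norm_num)
    have h3 := h1.comp h2
    refine h3.congr fun c => ?_
    simp only [Function.comp, pow_one]
    have hε0 : ε ≠ 0 := by positivity
    field_simp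
  refine squeeze_zero' ?_ ?_ hlim
  · filter_upwards with c
    positivity
  · filter_upwards [eventually_ge_atTop (max 1 |d'|⁻¹)] with c hc
    have hc1 : 1 ≤ c := le_trans (le_max_left _ _) hc
    have hc0 : 0 < c := by linarith
    set A := s*(c*|d|) with hA
    have hA0 : 0 ≤ A := by positivity
    set E := Real.exp (-(c^2*(ω - d^2))/2) with hE
    set E' := Real.exp (-(c^2*(ω' - d'^2))/2) with hE'
    set T := C * c^2 * Real.exp (-(ε/2*c^2)) with hT
    have hT0 : 0 ≤ T := by positivity
    -- numerator upper bound
    have hnum : Real.exp (-(c^2*ω)/2) * Real.sqrt (1 + (ImInt (c*d))^2) ≤ (1 + A) * E := by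
      have h1 : Real.sqrt (1 + (ImInt (c*d))^2) ≤ 1 + |ImInt (c*d)| := by
        have h := Real.sqrt_le_sqrt
          (show 1 + (ImInt (c*d))^2 ≤ (1+|ImInt (c*d)|)^2 by
            nlinarith [abs_nonneg (ImInt (c*d)), sq_abs (ImInt (c*d))])
        rwa [Real.sqrt_sq (by positivity)] at h
      have habs : |c*d| = c*|d| := by rw [abs_mul, abs_of_nonneg hc0.le]
      have h2 : |ImInt (c*d)| ≤ A * Real.exp ((c*d)^2/2) := by
        have h := abs_ImInt_le (c*d); rw [habs] at h; rw [hA]; linarith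
      have h3 : (1:ℝ) ≤ Real.exp ((c*d)^2/2) := Real.one_le_exp (by positivity)
      have h4 : Real.sqrt (1 + (ImInt (c*d))^2) ≤ (1 + A) * Real.exp ((c*d)^2/2) := by
        nlinarith [Real.exp_pos ((c*d)^2/2)]
      calc Real.exp (-(c^2*ω)/2) * Real.sqrt (1 + (ImInt (c*d))^2)
          ≤ Real.exp (-(c^2*ω)/2) * ((1 + A) * Real.exp ((c*d)^2/2)) := by
            exact mul_le_mul_of_nonneg_left h4 (Real.exp_pos _).le
        _ = (1 + A) * (Real.exp (-(c^2*ω)/2) * Real.exp ((c*d)^2/2)) := by ring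
        _ = (1 + A) * E := by rw [← Real.exp_add, hE]; congr 1; ring
    -- denominator positivity
    have hsq1 : (1:ℝ) ≤ Real.sqrt (1 + (ImInt (c*d'))^2) := by
      have h := Real.sqrt_le_sqrt
        (show (1:ℝ) ≤ 1 + (ImInt (c*d'))^2 by nlinarith [sq_nonneg (ImInt (c*d'))])
      rwa [Real.sqrt_one] at h
    have hden0 : 0 < Real.exp (-(c^2*ω')/2) * Real.sqrt (1 + (ImInt (c*d'))^2) :=
      mul_pos (Real.exp_pos _) (lt_of_lt_of_le one_pos hsq1)
    rw [div_le_iff₀ hden0]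
    have hεe : Real.exp (-(ε/2*c^2)) * E' = E := by
      rw [hE', hE, ← Real.exp_add]; congr 1; rw [hεdef]; ring
    by_cases hd' : d' = 0
    · -- denominator equals E'
      have hdeq : Real.exp (-(c^2*ω')/2) * Real.sqrt (1 + (ImInt (c*d'))^2) = E' := by
        rw [hE', hd', mul_zero, ImInt_zero]
        norm_num
      rw [hdeq]
      have hkey : 1 + A ≤ C * c^2 := by
        have hb : 1 + A ≤ (1+s*|d|)*c^2 := by
          rw [hA]; nlinarith [mul_nonneg hs0.le (abs_nonneg d), sq_nonneg (c-1)]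
        refine hb.trans ?_
        rw [hC]
        have : (1+s*|d|) ≤ (1+s*|d|) * (max 1 (|d'| * Real.exp 1 * s⁻¹)) := by
          nlinarith
        nlinarith [sq_nonneg c, sq_abs c, mul_pos hc0 hc0]
      calc Real.exp (-(c^2*ω)/2) * Real.sqrt (1 + (ImInt (c*d))^2)
          ≤ (1 + A) * E := hnum
        _ ≤ (C * c^2) * E := mul_le_mul_of_nonneg_right hkey (Real.exp_pos _).le
        _ = T * E' := by rw [hT, ← hεe]; ring
    · -- denominator lower bound via ImInt_ge
      have hd'0 : 0 < |d'| := abs_pos.mpr hd'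
      have hcd' : 1 ≤ c * |d'| := by
        have h := le_trans (le_max_right _ _) hc
        calc (1:ℝ) = |d'|⁻¹ * |d'| := by field_simp
          _ ≤ c * |d'| := mul_le_mul_of_nonneg_right h hd'0.le
      set m := s * Real.exp (-1) * (c*|d'|)⁻¹ with hm
      have hm0 : 0 < m := by positivity
      have hdlow : E' * m ≤ Real.exp (-(c^2*ω')/2) * Real.sqrt (1 + (ImInt (c*d'))^2) := by
        have h1 : |ImInt (c*d')| ≤ Real.sqrt (1 + (ImInt (c*d'))^2) := by
          rw [show |ImInt (c*d')| = Real.sqrt ((ImInt (c*d'))^2) by rw [Real.sqrt_sq_eq_abs]]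
          exact Real.sqrt_le_sqrt (by linarith)
        have h2 : s * (c*|d'|)⁻¹ * Real.exp ((c*|d'|)^2/2 - 1) ≤ |ImInt (c*d')| := by
          rw [abs_ImInt_eq, show |c*d'| = c*|d'| by rw [abs_mul, abs_of_nonneg hc0.le]]
          exact ImInt_ge hcd'
        have h3 : E' * m
            = Real.exp (-(c^2*ω')/2) * (s * (c*|d'|)⁻¹ * Real.exp ((c*|d'|)^2/2 - 1)) := by
          rw [hE', hm]
          rw [show ((c*|d'|)^2/2 - 1 : ℝ) = c^2*d'^2/2 - 1 by rw [mul_pow, sq_abs]]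
          rw [show (-(c^2*(ω' - d'^2))/2 : ℝ) = -(c^2*ω')/2 + (c^2*d'^2/2 - 1) + 1 by ring]
          rw [Real.exp_add, Real.exp_add, show Real.exp (-1:ℝ) = (Real.exp 1)⁻¹ by rw [Real.exp_neg]]
          have h5 := Real.exp_ne_zero 1
          field_simp
        rw [h3]
        exact mul_le_mul_of_nonneg_left (h2.trans h1) (Real.exp_pos _).le
      have hkey : 1 + A ≤ C * c^2 * m := by
        have hCge : (1+s*|d|)*(|d'| * Real.exp 1 * s⁻¹) ≤ C :=
          mul_le_mul_of_nonneg_left (le_max_right _ _) h1sd.le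
        have step1 : 1 + A ≤ (1+s*|d|)*c := by
          rw [hA]; nlinarith [mul_nonneg hs0.le (abs_nonneg d)]
        have step2 : (1+s*|d|)*c = ((1+s*|d|)*(|d'| * Real.exp 1 * s⁻¹)) * c^2 * m := by
          rw [hm, Real.exp_neg]
          have he0 : Real.exp 1 ≠ 0 := (Real.exp_pos 1).ne'
          field_simp
        rw [step2] at step1
        refine step1.trans ?_
        have h4 : 0 ≤ c^2 * m := by positivity
        calc ((1+s*|d|)*(|d'| * Real.exp 1 * s⁻¹)) * c^2 * m
            = ((1+s*|d|)*(|d'| * Real.exp 1 * s⁻¹)) * (c^2 * m) := by ring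
          _ ≤ C * (c^2 * m) := mul_le_mul_of_nonneg_right hCge h4
          _ = C * c^2 * m := by ring
      calc Real.exp (-(c^2*ω)/2) * Real.sqrt (1 + (ImInt (c*d))^2)
          ≤ (1 + A) * E := hnum
        _ ≤ (C * c^2 * m) * E := mul_le_mul_of_nonneg_right hkey (Real.exp_pos _).le
        _ = T * (E' * m) := by rw [hT, ← hεe]; ring
        _ ≤ T * (Real.exp (-(c^2*ω')/2) * Real.sqrt (1 + (ImInt (c*d'))^2)) :=
            mul_le_mul_of_nonneg_left hdlow hT0

theorem stmt12 (K : ℕ) (hK : 0 < K)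
    (μ Λ μ' Λ' : Fin K → ℝ) (Ω Ω' : Matrix (Fin K) (Fin K) ℝ)
    (hΩ : Ω.PosDef) (hΩ' : Ω'.PosDef) :
    ∀ t : Fin K → ℝ, 0 < t ⬝ᵥ (msnGamma Ω hΩ Λ - msnGamma Ω' hΩ' Λ').mulVec t →
      Tendsto (fun c : ℝ => msnCF μ Ω hΩ Λ (c • t) / msnCF μ' Ω' hΩ' Λ' (c • t))
        atTop (nhds 0) := by
  intro t ht
  have hscale : ∀ (M : Matrix (Fin K) (Fin K) ℝ) (c : ℝ),
      (c • t) ⬝ᵥ M.mulVec (c • t) = c^2 * (t ⬝ᵥ M.mulVec t) := by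
    intro M c
    rw [Matrix.mulVec_smul, dotProduct_smul, smul_dotProduct, smul_eq_mul, smul_eq_mul]
    ring
  have hds : ∀ (v : Fin K → ℝ) (c : ℝ), v ⬝ᵥ (c • t) = c * (v ⬝ᵥ t) := by
    intro v c
    rw [dotProduct_smul, smul_eq_mul]
  have hq : t ⬝ᵥ (msnGamma Ω hΩ Λ - msnGamma Ω' hΩ' Λ').mulVec t
      = (t ⬝ᵥ Ω.mulVec t - (msnDelta Ω hΩ Λ ⬝ᵥ t)^2)
        - (t ⬝ᵥ Ω'.mulVec t - (msnDelta Ω' hΩ' Λ' ⬝ᵥ t)^2) := by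
    unfold msnGamma
    rw [Matrix.sub_mulVec, dotProduct_sub, Matrix.sub_mulVec, dotProduct_sub,
      Matrix.sub_mulVec, dotProduct_sub, dot_vecMulVec, dot_vecMulVec]
  rw [hq] at ht
  rw [tendsto_zero_iff_norm_tendsto_zero]
  refine (key_tendsto (t ⬝ᵥ Ω.mulVec t) (t ⬝ᵥ Ω'.mulVec t)
    (msnDelta Ω hΩ Λ ⬝ᵥ t) (msnDelta Ω' hΩ' Λ' ⬝ᵥ t) ht).congr fun c => ?_
  rw [norm_div, msnCF_abs, msnCF_abs,
    hscale, hscale, hds, hds]
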